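/- Let U be an open subset of X̂ = 𝔻_E × T. If N^L_∞(U) = U ∩ X_∞, then U is regular at ∞, i.e., N¹_∞(U) = U ∩ X_∞. -/

import Mathlib

open Metric Filter

noncomputable section

/-- `ℂⁿ` with the Euclidean norm. -/
abbrev Cn (n : ℕ) := EuclideanSpace ℂ (Fin n)

/-- The radial compactification `𝔻_E` of `E = ℂⁿ`, as the disjoint union of `ℂⁿ`
and a copy `S^{2n-1}∞` of the unit sphere. -/
abbrev DE (n : ℕ) := Cn n ⊕ Metric.sphere (0 : Cn n) 1

/-- The bijection `φ : D → 𝔻_E`, `φ(z) = z/(1-|z|)` on the open ball and `φ(z) = z∞`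
on the boundary sphere. -/
noncomputable def phiD (n : ℕ) : Metric.closedBall (0 : Cn n) 1 → DE n :=
  fun z =>
    if h : ‖(z : Cn n)‖ < 1 then
      Sum.inl ((1 - ‖(z : Cn n)‖)⁻¹ • (z : Cn n))
    else
      Sum.inr ⟨(z : Cn n), by
        have h1 : ‖(z : Cn n)‖ ≤ 1 := mem_closedBall_zero_iff.mp z.2
        exact mem_sphere_zero_iff_norm.mpr (le_antisymm h1 (not_lt.mp h))⟩

/-- The topology on `𝔻_E`, transported from the closed unit ball via `φ`
(so that `φ` is a homeomorphism). -/
instance DEtop (n : ℕ) : TopologicalSpace (DE n) :=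
  TopologicalSpace.coinduced (phiD n) inferInstance

/-- The space of holomorphic parameters `T = ℂᵐ`. -/
abbrev Tm (m : ℕ) := EuclideanSpace ℂ (Fin m)

/-- The partial radial compactification `X̂ = 𝔻_E × T`. -/
abbrev Xhat (n m : ℕ) := DE n × Tm m

/-- The set at infinity `X_∞ = X̂ ∖ X`. -/
def Xinf (n m : ℕ) : Set (Xhat n m) := {p | ∃ x t, p = (Sum.inr x, t)}

/-- The finite part `X = E × T` inside `X̂`. -/
def finiteX (n m : ℕ) : Set (Xhat n m) := {p | ∃ z t, p = (Sum.inl z, t)}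

/-- `clos¹_∞(A)`: the set of points `(z∞, t) ∈ X_∞` which are limits of sequences
`(z_k, t_k) ∈ A ∩ X` with `|z_{k+1}|/|z_k| → 1`. -/
def closOneInf {n m : ℕ} (A : Set (Xhat n m)) : Set (Xhat n m) :=
  {p | p ∈ Xinf n m ∧ ∃ (z : ℕ → Cn n) (ts : ℕ → Tm m),
    (∀ k, ((Sum.inl (z k) : DE n), ts k) ∈ A) ∧
    Tendsto (fun k => ((Sum.inl (z k) : DE n), ts k)) atTop (nhds p) ∧
    Tendsto (fun k => ‖z (k + 1)‖ / ‖z k‖) atTop (nhds 1)}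

/-- `N¹_∞(A) := X_∞ ∖ clos¹_∞(X ∖ A)`. -/
def NOneInf {n m : ℕ} (A : Set (Xhat n m)) : Set (Xhat n m) :=
  Xinf n m \ closOneInf (finiteX n m \ A)

/-- An open subset `U ⊂ X̂` is regular at `∞` if `N¹_∞(U) = U ∩ X_∞`. -/
def RegularAtInf {n m : ℕ} (U : Set (Xhat n m)) : Prop :=
  NOneInf U = U ∩ Xinf n m

/-- `N^L_∞(A)`: points `(ζ∞, t) ∈ X_∞` lying in the closure in `X̂` of
`(ℝ₊ζ × {t}) ∩ A`. -/
def NLInf {n m : ℕ} (A : Set (Xhat n m)) : Set (Xhat n m) :=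
  {p | ∃ (ζ : Metric.sphere (0 : Cn n) 1) (t : Tm m), p = (Sum.inr ζ, t) ∧
    p ∈ closure ({q : Xhat n m | ∃ r : ℝ, 0 < r ∧
      q = (Sum.inl (r • (ζ : Cn n)), t)} ∩ A)}

lemma norm_sphere_coe {n : ℕ} (ζ : Metric.sphere (0 : Cn n) 1) : ‖(ζ : Cn n)‖ = 1 :=
  mem_sphere_zero_iff_norm.mp ζ.2

/-- Points `r • ζ` on the ray tend to `ζ∞` in `𝔻_E` as `r → ∞`. -/
lemma ray_tendsto {n : ℕ} (ζ : Metric.sphere (0 : Cn n) 1) :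
    Tendsto (fun r : ℝ => (Sum.inl (r • (ζ : Cn n)) : DE n)) atTop
      (nhds (Sum.inr ζ : DE n)) := by
  have hζ : ‖(ζ : Cn n)‖ = 1 := norm_sphere_coe ζ
  set s : ℝ → ℝ := fun r => 1 - (1 + max r 0)⁻¹ with hs
  have hbase : ∀ r : ℝ, (0:ℝ) < 1 + max r 0 := by
    intro r
    have := le_max_right r 0
    linarith
  have hs0 : ∀ r, 0 ≤ s r := by
    intro r
    have h1 : (1:ℝ) ≤ 1 + max r 0 := by
      have := le_max_right r 0; linarith
    have : (1 + max r 0)⁻¹ ≤ 1 := by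
      rw [inv_le_one_iff₀]; right; exact h1
    simp only [hs]; linarith
  have hs1 : ∀ r, s r < 1 := by
    intro r
    have : 0 < (1 + max r 0)⁻¹ := inv_pos.mpr (hbase r)
    simp only [hs]; linarith
  have hmemζ : (ζ : Cn n) ∈ Metric.closedBall (0 : Cn n) 1 := by
    rw [mem_closedBall_zero_iff, hζ]
  have hnorm : ∀ r, ‖s r • (ζ : Cn n)‖ = s r := by
    intro r
    rw [norm_smul, hζ, mul_one, Real.norm_eq_abs, abs_of_nonneg (hs0 r)]
  set g : ℝ → Metric.closedBall (0 : Cn n) 1 := fun r =>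
    ⟨s r • (ζ : Cn n), by rw [mem_closedBall_zero_iff, hnorm]; exact (hs1 r).le⟩ with hg
  have hφ : Continuous (phiD n) := continuous_coinduced_rng
  have hgt : Tendsto g atTop (nhds ⟨(ζ : Cn n), hmemζ⟩) := by
    rw [tendsto_subtype_rng]
    have hst : Tendsto s atTop (nhds 1) := by
      have htop : Tendsto (fun r : ℝ => 1 + max r 0) atTop atTop := by
        apply tendsto_atTop_mono (fun r => ?_) tendsto_id
        have := le_max_left r 0; simp only [id]; linarith
      have := htop.inv_tendsto_atTop
      simpa using tendsto_const_nhds.sub this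
    simpa using hst.smul_const (ζ : Cn n)
  have hcomp := (hφ.tendsto _).comp hgt
  have hval : phiD n ⟨(ζ : Cn n), hmemζ⟩ = (Sum.inr ζ : DE n) := by
    simp only [phiD, hζ]
    rw [dif_neg (by norm_num)]
  rw [hval] at hcomp
  refine hcomp.congr' ?_
  filter_upwards [eventually_ge_atTop (0:ℝ)] with r hr
  have hmax : max r 0 = r := max_eq_left hr
  have hposr : (0:ℝ) < 1 + r := by linarith
  have hsr : s r = 1 - (1 + r)⁻¹ := by simp only [hs, hmax]
  show phiD n (g r) = (Sum.inl (r • (ζ : Cn n)) : DE n)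
  have hlt : ‖(g r : Cn n)‖ < 1 := by
    show ‖s r • (ζ : Cn n)‖ < 1
    rw [hnorm]; exact hs1 r
  simp only [phiD, hg]
  rw [dif_pos hlt]
  congr 1
  have h1s : (1 - s r) = (1 + r)⁻¹ := by rw [hsr]; ring
  rw [hnorm, smul_smul, h1s, inv_inv]
  congr 1
  rw [hsr]
  field_simp
  ring

/-- If an open `U ⊂ X̂` satisfies `N^L_∞(U) = U ∩ X_∞`, then `U` is regular at `∞`. -/
theorem regularAtInf_of_NLInf {n m : ℕ} (U : Set (Xhat n m)) (hU : IsOpen U)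
    (h : NLInf U = U ∩ Xinf n m) : RegularAtInf U := by
  unfold RegularAtInf NOneInf
  ext p
  constructor
  · rintro ⟨hpinf, hpcl⟩
    refine ⟨?_, hpinf⟩
    by_contra hpU
    apply hpcl
    obtain ⟨ζ, t, rfl⟩ := hpinf
    have hζ : ‖(ζ : Cn n)‖ = 1 := norm_sphere_coe ζ
    have hnl : ((Sum.inr ζ : DE n), t) ∉ NLInf U := by
      rw [h]; exact fun hc => hpU hc.1
    have hcl : ((Sum.inr ζ : DE n), t) ∉ closure
        ({q : Xhat n m | ∃ r : ℝ, 0 < r ∧ q = (Sum.inl (r • (ζ : Cn n)), t)} ∩ U) :=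
      fun hc => hnl ⟨ζ, t, rfl, hc⟩
    rw [_root_.mem_closure_iff] at hcl
    push_neg at hcl
    obtain ⟨V, hVopen, hpV, hVdisj⟩ := hcl
    have hray : Tendsto (fun r : ℝ => ((Sum.inl (r • (ζ : Cn n)) : DE n), t))
        atTop (nhds ((Sum.inr ζ : DE n), t)) :=
      (ray_tendsto ζ).prodMk_nhds tendsto_const_nhds
    have hev : ∀ᶠ r : ℝ in atTop,
        ((Sum.inl (r • (ζ : Cn n)) : DE n), t) ∉ U := by
      filter_upwards [hray.eventually (hVopen.mem_nhds hpV),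
        eventually_gt_atTop (0:ℝ)] with r hrV hr0 hrU
      exact (Set.not_nonempty_iff_eq_empty.mpr hVdisj)
        ⟨_, hrV, ⟨r, hr0, rfl⟩, hrU⟩
    obtain ⟨N, hN⟩ := eventually_atTop.mp hev
    set B := max N 1 with hB
    have hB1 : (1:ℝ) ≤ B := le_max_right _ _
    have hBN : N ≤ B := le_max_left _ _
    have hpos : ∀ k : ℕ, (0:ℝ) < B + k := by
      intro k; have : (0:ℝ) ≤ (k:ℝ) := Nat.cast_nonneg k; linarith
    have htop : Tendsto (fun k : ℕ => B + (k:ℝ)) atTop atTop :=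
      tendsto_atTop_add_const_left atTop B tendsto_natCast_atTop_atTop
    refine ⟨⟨ζ, t, rfl⟩, fun k => (B + (k:ℝ)) • (ζ : Cn n), fun _ => t, ?_, ?_, ?_⟩
    · intro k
      refine ⟨⟨_, _, rfl⟩, hN (B + (k:ℝ)) ?_⟩
      have : (0:ℝ) ≤ (k:ℝ) := Nat.cast_nonneg k
      linarith
    · exact hray.comp htop
    · have hnormk : ∀ k : ℕ, ‖(B + (k:ℝ)) • (ζ : Cn n)‖ = B + (k:ℝ) := by
        intro k
        rw [norm_smul, hζ, mul_one, Real.norm_eq_abs, abs_of_pos (hpos k)]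
      have hlim : Tendsto (fun k : ℕ => 1 + (B + (k:ℝ))⁻¹) atTop (nhds 1) := by
        simpa using tendsto_const_nhds.add htop.inv_tendsto_atTop
      refine hlim.congr fun k => ?_
      rw [hnormk, hnormk]
      have h0 : B + (k:ℝ) ≠ 0 := (hpos k).ne'
      push_cast
      field_simp
      ring
  · rintro ⟨hpU, hpinf⟩
    refine ⟨hpinf, ?_⟩
    rintro ⟨-, z, ts, hmem, htend, -⟩
    obtain ⟨k, hk⟩ := (htend.eventually (hU.mem_nhds hpU)).exists
    exact (hmem k).2 hk
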